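/- Let $N\geq 3$, $q>1$, $\lambda<(N-2)^2/4$, and set $p_+=\frac{N-2}{2}+\sqrt{(N-2)^2/4-\lambda}$, $\theta=\theta_++4\sqrt{(N-2)^2/4-\lambda}$ where $\theta_+=p_+(q-1)-2$, and let $\ell=\Theta^2-(N-2)\Theta+\lambda$ with $\Theta=(\theta+2)/(q-1)$. Then for every $\mu>0$ the function $u_{\mu}(x)=|x|^{-p_+}\left(\mu^{-2\sqrt{(N-2)^2/4-\lambda}}+\ell^{-1/2}|x|^{2\sqrt{(N-2)^2/4-\lambda}}\right)^{-2/(q-1)}$ is a positive solution of $-\Delta u-\lambda|x|^{-2}u+|x|^{\theta}u^q=0$ in $\mathbb{R}^N\setminus\{0\}$. -/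

import Mathlib

open scoped BigOperators

noncomputable def lap {N : ℕ} (u : EuclideanSpace ℝ (Fin N) → ℝ)
    (x : EuclideanSpace ℝ (Fin N)) : ℝ :=
  ∑ i : Fin N, fderiv ℝ (fun y => fderiv ℝ u y (EuclideanSpace.single i 1)) x
    (EuclideanSpace.single i 1)

open scoped RealInnerProductSpace

noncomputable def PHI (a b s c m : ℝ) : ℝ → ℝ := fun t => t ^ c * (a + b * t ^ s) ^ (-m)

noncomputable def PSI (a b s c m : ℝ) : ℝ → ℝ := fun t =>
  c * t^(c-1) * (a + b*t^s)^(-m) + (-(m*s*b)) * (t^(c+s-1) * (a + b*t^s)^(-(m+1)))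

noncomputable def CHI (a b s c m : ℝ) : ℝ → ℝ := fun t =>
  c*(c-1)*t^(c-2)*(a+b*t^s)^(-m)
    + (-(m*s*b)*(2*c+s-1))*(t^(c+s-2)*(a+b*t^s)^(-(m+1)))
    + (m*(m+1)*s^2*b^2)*(t^(c+2*s-2)*(a+b*t^s)^(-(m+2)))

lemma hGd (a b s t : ℝ) (ht : 0 < t) :
    HasDerivAt (fun u : ℝ => a + b * u ^ s) (b * (s * t ^ (s-1))) t :=
  ((Real.hasDerivAt_rpow_const (Or.inl ht.ne')).const_mul b).const_add a

lemma hd1 (a b s c m t : ℝ) (ht : 0 < t) (hG : a + b * t ^ s ≠ 0) :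
    HasDerivAt (PHI a b s c m) (PSI a b s c m t) t := by
  have h1 : HasDerivAt (fun u : ℝ => u ^ c) (c * t ^ (c-1)) t :=
    Real.hasDerivAt_rpow_const (Or.inl ht.ne')
  have h2 : HasDerivAt (fun u : ℝ => (a + b * u ^ s) ^ (-m))
      ((b * (s * t ^ (s-1))) * (-m) * (a + b * t ^ s) ^ (-m-1)) t :=
    (hGd a b s t ht).rpow_const (Or.inl hG)
  have := h1.mul h2
  unfold PHI PSI
  refine this.congr_deriv ?_
  rw [show c + s - 1 = c + (s-1) from by ring, Real.rpow_add ht,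
    show -(m+1) = -m-1 from by ring]
  ring

lemma hd2 (a b s c m t : ℝ) (ht : 0 < t) (hG : a + b * t ^ s ≠ 0) :
    HasDerivAt (PSI a b s c m) (CHI a b s c m t) t := by
  have h1 : HasDerivAt (fun u : ℝ => u ^ (c-1)) ((c-1) * t ^ (c-1-1)) t :=
    Real.hasDerivAt_rpow_const (Or.inl ht.ne')
  have h2 : HasDerivAt (fun u : ℝ => (a + b * u ^ s) ^ (-m))
      ((b * (s * t ^ (s-1))) * (-m) * (a + b * t ^ s) ^ (-m-1)) t :=
    (hGd a b s t ht).rpow_const (Or.inl hG)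
  have h3 : HasDerivAt (fun u : ℝ => u ^ (c+s-1)) ((c+s-1) * t ^ (c+s-1-1)) t :=
    Real.hasDerivAt_rpow_const (Or.inl ht.ne')
  have h4 : HasDerivAt (fun u : ℝ => (a + b * u ^ s) ^ (-(m+1)))
      ((b * (s * t ^ (s-1))) * (-(m+1)) * (a + b * t ^ s) ^ (-(m+1)-1)) t :=
    (hGd a b s t ht).rpow_const (Or.inl hG)
  have := ((h1.const_mul c).mul h2).add (((h3.mul h4)).const_mul (-(m*s*b)))
  unfold PSI CHI
  refine this.congr_deriv ?_
  rw [show c - 2 = c - 1 - 1 from by ring,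
    show c + s - 2 = c + s - 1 - 1 from by ring,
    show t ^ (c+2*s-2) = t ^ (c+s-1) * t ^ (s-1) from by
      rw [← Real.rpow_add ht]; ring_nf,
    show (-(m+2) : ℝ) = -(m+1)-1 from by ring,
    show t ^ (c+s-1-1) = t ^ (c-1) * t ^ (s-1) from by
      rw [← Real.rpow_add ht]; ring_nf,
    show -(m+1) = -m-1 from by ring]
  ring

lemma alg (n a b s c m lam q e w : ℝ) (hw : 0 < w) (ha : 0 < a) (hb : 0 < b)
    (i1 : 4*c^2 - 4*c + 2*n*c + lam = 0)
    (i2 : 2*n + 8*c + 4*s - 4 = 0)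
    (i3 : 4*(m*(m+1)*s^2*b^2) = 1)
    (i4 : m*q = m + 2)
    (i5 : e + c*q = c + 2*s - 1) :
    -(2*n*(PSI a b s c m w) + 4*w*(CHI a b s c m w))
      - lam / w * (PHI a b s c m w)
      + w^e * (PHI a b s c m w)^q = 0 := by
  unfold PHI PSI CHI
  have hT : (0:ℝ) < w ^ s := Real.rpow_pos_of_pos hw s
  have hG : (0:ℝ) < a + b * w ^ s := by positivity
  have hX : (0:ℝ) < w ^ c := Real.rpow_pos_of_pos hw c
  have hY : (0:ℝ) < (a + b * w ^ s) ^ (-m) := Real.rpow_pos_of_pos hG _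
  have e1 : w^(c-1) = w^c / w := by
    rw [Real.rpow_sub hw, Real.rpow_one]
  have e2 : w^(c-2) = w^c / w / w := by
    rw [show c-2 = c-1-1 from by ring, Real.rpow_sub hw, Real.rpow_sub hw, Real.rpow_one]
  have e3 : w^(c+s-1) = w^c * w^s / w := by
    rw [Real.rpow_sub hw, Real.rpow_add hw, Real.rpow_one]
  have e4 : w^(c+s-2) = w^c * w^s / w / w := by
    rw [show c+s-2 = c+s-1-1 from by ring, Real.rpow_sub hw, Real.rpow_sub hw,
      Real.rpow_add hw, Real.rpow_one]
  have e5 : w^(c+2*s-2) = w^c * w^s * w^s / w / w := by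
    rw [show c+2*s-2 = c+s+s-1-1 from by ring, Real.rpow_sub hw, Real.rpow_sub hw,
      Real.rpow_add hw, Real.rpow_add hw, Real.rpow_one]
  have f1 : (a+b*w^s)^(-(m+1)) = (a+b*w^s)^(-m) / (a+b*w^s) := by
    rw [show -(m+1) = -m-1 from by ring, Real.rpow_sub hG, Real.rpow_one]
  have f2 : (a+b*w^s)^(-(m+2)) = (a+b*w^s)^(-m) / (a+b*w^s) / (a+b*w^s) := by
    rw [show -(m+2) = -m-1-1 from by ring, Real.rpow_sub hG, Real.rpow_sub hG, Real.rpow_one]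
  have f3 : w^e * (w^c * (a+b*w^s)^(-m))^q
      = (w^c * w^s * w^s / w) * ((a+b*w^s)^(-m) / (a+b*w^s) / (a+b*w^s)) := by
    rw [Real.mul_rpow hX.le hY.le, ← Real.rpow_mul hw.le, ← Real.rpow_mul hG.le,
      ← mul_assoc, ← Real.rpow_add hw e (c*q), i5,
      show -m*q = -(m+2) from by linear_combination -i4,
      show c+2*s-1 = c+s+s-1 from by ring, Real.rpow_sub hw (c+s+s) 1,
      Real.rpow_add hw (c+s) s, Real.rpow_add hw c s, Real.rpow_one, f2]
  rw [e1, e2, e3, e4, e5, f1, f2, f3]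
  have hwi : w * w⁻¹ = 1 := mul_inv_cancel₀ hw.ne'
  set X := w ^ c
  set T := w ^ s
  set G := a + b * T
  set Y := G ^ (-m)
  linear_combination (-(X*Y*w⁻¹))*i1 + (m*s*b*X*T*Y*w⁻¹*G⁻¹)*i2
    + (-(X*T*T*Y*w⁻¹*G⁻¹*G⁻¹))*i3
    + (-4*c*(c-1)*X*Y*w⁻¹ + 4*m*s*b*(2*c+s-1)*X*T*Y*w⁻¹*G⁻¹
        - 4*(m*(m+1)*s^2*b^2)*X*T*T*Y*w⁻¹*G⁻¹*G⁻¹)*hwi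

theorem stmt_9 (N : ℕ) (hN : 3 ≤ N) (q lam : ℝ) (hq : 1 < q)
    (hlam : lam < ((N : ℝ) - 2) ^ 2 / 4)
    (s pp θ Θ ℓ : ℝ) (hs : s = Real.sqrt (((N : ℝ) - 2) ^ 2 / 4 - lam))
    (hpp : pp = ((N : ℝ) - 2) / 2 + s)
    (hθ : θ = (pp * (q - 1) - 2) + 4 * s)
    (hΘ : Θ = (θ + 2) / (q - 1)) (hℓ : ℓ = Θ ^ 2 - ((N : ℝ) - 2) * Θ + lam) :
    ∀ μ : ℝ, 0 < μ → ∀ x : EuclideanSpace ℝ (Fin N), x ≠ 0 →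
      0 < ‖x‖ ^ (-pp) * (μ ^ (-2 * s) + ℓ ^ (-(1 : ℝ) / 2) * ‖x‖ ^ (2 * s)) ^ (-2 / (q - 1)) ∧
      -lap (fun y => ‖y‖ ^ (-pp) * (μ ^ (-2 * s) + ℓ ^ (-(1 : ℝ) / 2) * ‖y‖ ^ (2 * s)) ^ (-2 / (q - 1))) x
        - lam / ‖x‖ ^ 2 * (‖x‖ ^ (-pp) * (μ ^ (-2 * s) + ℓ ^ (-(1 : ℝ) / 2) * ‖x‖ ^ (2 * s)) ^ (-2 / (q - 1)))
        + ‖x‖ ^ θ * (‖x‖ ^ (-pp) * (μ ^ (-2 * s) + ℓ ^ (-(1 : ℝ) / 2) * ‖x‖ ^ (2 * s)) ^ (-2 / (q - 1))) ^ q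
        = 0 := by
  intro μ hμ x hx
  have hq1 : (0:ℝ) < q - 1 := by linarith
  have hs0 : 0 < s := by
    rw [hs]; exact Real.sqrt_pos.mpr (by linarith)
  have hs2 : s ^ 2 = ((N : ℝ) - 2) ^ 2 / 4 - lam := by
    rw [hs, sq]; exact Real.mul_self_sqrt (by linarith)
  have h1 : pp^2 - ((N:ℝ)-2)*pp + lam = 0 := by
    rw [hpp]; linear_combination hs2
  have hΘv : Θ = pp + 4*s/(q-1) := by
    rw [hΘ, hθ]; field_simp; ring
  have hqv : (q - 1) * (q - 1)⁻¹ = 1 := mul_inv_cancel₀ hq1.ne'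
  have hℓval : ℓ = 8*s^2*(q+1)/(q-1)/(q-1) := by
    rw [hℓ, hΘv]
    linear_combination h1 + (8*s*(q-1)⁻¹)*hpp + (-8*s^2*(q-1)⁻¹)*hqv
  have hℓ0 : 0 < ℓ := by rw [hℓval]; positivity
  set a := μ ^ (-2*s) with hadef
  set b := ℓ ^ (-(1:ℝ)/2) with hbdef
  have ha : 0 < a := Real.rpow_pos_of_pos hμ _
  have hb : 0 < b := Real.rpow_pos_of_pos hℓ0 _
  have hb2 : b^2 = ℓ⁻¹ := by
    rw [hbdef, sq, ← Real.rpow_add hℓ0]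
    norm_num [Real.rpow_neg_one]
  set c := -(pp/2) with hcdef
  set m := 2/(q-1) with hmdef
  -- the algebraic coefficient identities
  have i1 : 4*c^2 - 4*c + 2*(N:ℝ)*c + lam = 0 := by
    rw [hcdef]; linear_combination h1
  have i2 : 2*(N:ℝ) + 8*c + 4*s - 4 = 0 := by
    rw [hcdef, hpp]; ring
  have i3 : 4*(m*(m+1)*s^2*b^2) = 1 := by
    have hkey : 4*(m*(m+1)*s^2) = ℓ := by
      rw [hmdef, hℓval]; field_simp; ring
    calc 4*(m*(m+1)*s^2*b^2) = (4*(m*(m+1)*s^2))*b^2 := by ring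
      _ = ℓ * ℓ⁻¹ := by rw [hkey, hb2]
      _ = 1 := mul_inv_cancel₀ hℓ0.ne'
  have i4 : m*q = m + 2 := by rw [hmdef]; field_simp; ring
  have i5 : θ/2 + c*q = c + 2*s - 1 := by
    rw [hcdef, hθ]; ring
  -- the radial profile
  have hueq : ∀ y : EuclideanSpace ℝ (Fin N),
      ‖y‖ ^ (-pp) * (a + b * ‖y‖ ^ (2*s)) ^ (-2/(q-1)) = PHI a b s c m (‖y‖^2) := by
    intro y
    unfold PHI
    rw [← Real.rpow_natCast ‖y‖ 2, ← Real.rpow_mul (norm_nonneg y),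
      ← Real.rpow_mul (norm_nonneg y),
      show ((2:ℕ):ℝ) * c = -pp from by rw [hcdef]; push_cast; ring,
      show ((2:ℕ):ℝ) * s = 2*s from by push_cast; ring,
      show -2/(q-1) = -m from by rw [hmdef]; ring]
  have hufun : (fun y : EuclideanSpace ℝ (Fin N) =>
      ‖y‖ ^ (-pp) * (a + b * ‖y‖ ^ (2*s)) ^ (-2/(q-1)))
      = fun y => PHI a b s c m (‖y‖^2) := funext hueq
  have hxn : (0:ℝ) < ‖x‖ := norm_pos_iff.mpr hx
  have hw0 : (0:ℝ) < ‖x‖^2 := pow_pos hxn 2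
  have hGpos : ∀ t : ℝ, 0 < t → 0 < a + b * t ^ s := fun t ht =>
    add_pos ha (mul_pos hb (Real.rpow_pos_of_pos ht s))
  -- first derivative
  have hFD : ∀ y : EuclideanSpace ℝ (Fin N), y ≠ 0 →
      HasFDerivAt (fun y : EuclideanSpace ℝ (Fin N) => PHI a b s c m (‖y‖^2))
        ((PSI a b s c m (‖y‖^2)) • (2 • innerSL ℝ y)) y := by
    intro y hy
    have hyn : (0:ℝ) < ‖y‖^2 := pow_pos (norm_pos_iff.mpr hy) 2
    have := (hd1 a b s c m (‖y‖^2) hyn (hGpos _ hyn).ne').comp_hasFDerivAt y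
      (hasStrictFDerivAt_norm_sq y).hasFDerivAt
    exact this
  have hFD2 : HasFDerivAt (fun y : EuclideanSpace ℝ (Fin N) => PSI a b s c m (‖y‖^2))
      ((CHI a b s c m (‖x‖^2)) • (2 • innerSL ℝ x)) x := by
    have := (hd2 a b s c m (‖x‖^2) hw0 (hGpos _ hw0).ne').comp_hasFDerivAt x
      (hasStrictFDerivAt_norm_sq x).hasFDerivAt
    exact this
  -- second derivative telescoping
  have hlapi : ∀ i : Fin N,
      fderiv ℝ (fun y => fderiv ℝ (fun z : EuclideanSpace ℝ (Fin N) =>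
          PHI a b s c m (‖z‖^2)) y (EuclideanSpace.single i 1)) x (EuclideanSpace.single i 1)
        = 2 * PSI a b s c m (‖x‖^2) + 4 * CHI a b s c m (‖x‖^2) * (x i)^2 := by
    intro i
    have heq : (fun y => fderiv ℝ (fun z : EuclideanSpace ℝ (Fin N) =>
        PHI a b s c m (‖z‖^2)) y (EuclideanSpace.single i 1))
        =ᶠ[nhds x] (fun y => PSI a b s c m (‖y‖^2) * (2 * y i)) := by
      filter_upwards [IsOpen.mem_nhds isOpen_compl_singleton
        (by simpa using hx : x ∈ ({0}ᶜ : Set (EuclideanSpace ℝ (Fin N))))] with y hy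
      rw [(hFD y hy).fderiv]
      simp [EuclideanSpace.inner_single_right]
    rw [heq.fderiv_eq]
    have h2 : HasFDerivAt (fun y : EuclideanSpace ℝ (Fin N) => 2 * y i)
        ((2:ℝ) • (EuclideanSpace.proj (𝕜 := ℝ) i)) x :=
      (EuclideanSpace.proj (𝕜 := ℝ) i).hasFDerivAt.const_mul 2
    have hg : HasFDerivAt (fun y : EuclideanSpace ℝ (Fin N) =>
        PSI a b s c m (‖y‖^2) * (2 * y i)) _ x := hFD2.mul h2
    rw [hg.fderiv]
    simp [EuclideanSpace.inner_single_right]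
    try ring
  have hsum : ∑ i, (x i)^2 = ‖x‖^2 := by
    rw [EuclideanSpace.norm_eq, Real.sq_sqrt (by positivity)]
    simp [sq_abs]
  have hlapval : lap (fun y : EuclideanSpace ℝ (Fin N) =>
      PHI a b s c m (‖y‖^2)) x
      = 2 * (N:ℝ) * PSI a b s c m (‖x‖^2) + 4 * (‖x‖^2) * CHI a b s c m (‖x‖^2) := by
    unfold lap
    rw [Finset.sum_congr rfl fun i _ => hlapi i]
    rw [Finset.sum_add_distrib, Finset.sum_const, ← Finset.mul_sum, hsum]
    simp [Finset.card_univ]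
    ring
  constructor
  · exact mul_pos (Real.rpow_pos_of_pos hxn _)
      (Real.rpow_pos_of_pos
        (add_pos ha (mul_pos hb (Real.rpow_pos_of_pos hxn _))) _)
  · rw [hufun, hlapval, hueq x]
    have hxθ : ‖x‖ ^ θ = (‖x‖^2 : ℝ) ^ (θ/2) := by
      rw [← Real.rpow_natCast ‖x‖ 2, ← Real.rpow_mul (norm_nonneg x),
        show ((2:ℕ):ℝ) * (θ/2) = θ from by push_cast; ring]
    rw [hxθ]
    have := alg (N:ℝ) a b s c m lam q (θ/2) (‖x‖^2) hw0 ha hb i1 i2 i3 i4 i5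
    linear_combination this
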